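/- Let U be a Banach space, α ∈ (1/3, 1/2], X : [0,T] → U α-Hölder, and let (Z, Z') be a real-valued path controlled by X and (Y, Y') a V-valued path controlled by X (V a Banach space). Then the pointwise product (ZY, Z'Y + ZY') — where (Z'Y + ZY')_t(u) := (Z'_t u)·Y_t + Z_t·(Y'_t u) — is a V-valued path controlled by X, and its controlled-path norm is bounded by C·‖(Z,Z')‖·‖(Y,Y')‖ for a constant C depending only on T, α and ‖X‖_{α-Höl}. -/

import Mathlib

/-! STATEMENT 7: The product of a real-valued controlled path and a `V`-valued
controlled path is a controlled path, with Gubinelli derivative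
`u ↦ (Z'_t u)·Y_t + Z_t·(Y'_t u)`, and its controlled-path norm is bounded by
`C·‖(Z,Z')‖·‖(Y,Y')‖` with `C` depending only on `T`, `α` and `‖X‖_α`. -/

/-! STATEMENT 4: The space of paths controlled by an `α`-Hölder path `X`,
with the Gubinelli norm, is a Banach space under pointwise operations. -/

/-- `β`-Hölder seminorm of a map on `[0,T]`. -/
noncomputable def hSemi {E : Type*} [NormedAddCommGroup E] (T β : ℝ)
    (f : Set.Icc (0:ℝ) T → E) : ℝ :=
  ⨆ p : Set.Icc (0:ℝ) T × Set.Icc (0:ℝ) T,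
    if (p.1 : ℝ) < (p.2 : ℝ) then ‖f p.2 - f p.1‖ / ((p.2 : ℝ) - (p.1 : ℝ)) ^ β else 0

/-- `2α`-Hölder seminorm of the remainder `R_{ts} = Z_t - Z_s - Z'_s(X_t - X_s)`. -/
noncomputable def rSemi {U V : Type*} [NormedAddCommGroup U] [NormedSpace ℝ U]
    [NormedAddCommGroup V] [NormedSpace ℝ V] (T α : ℝ)
    (X : Set.Icc (0:ℝ) T → U) (Z : Set.Icc (0:ℝ) T → V)
    (Z' : Set.Icc (0:ℝ) T → U →L[ℝ] V) : ℝ :=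
  ⨆ p : Set.Icc (0:ℝ) T × Set.Icc (0:ℝ) T,
    if (p.1 : ℝ) < (p.2 : ℝ) then
      ‖Z p.2 - Z p.1 - Z' p.1 (X p.2 - X p.1)‖ / ((p.2 : ℝ) - (p.1 : ℝ)) ^ (2*α)
    else 0

/-- The set of controlled-path data `(Z, Z')`: `Z'` is `α`-Hölder and the
remainder is `2α`-Hölder. -/
def ctrlSet {U V : Type*} [NormedAddCommGroup U] [NormedSpace ℝ U]
    [NormedAddCommGroup V] [NormedSpace ℝ V] (T α : ℝ)
    (X : Set.Icc (0:ℝ) T → U) :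
    Set ((Set.Icc (0:ℝ) T → V) × (Set.Icc (0:ℝ) T → U →L[ℝ] V)) :=
  {p | (∃ C : ℝ, ∀ s t : Set.Icc (0:ℝ) T, ‖p.2 t - p.2 s‖ ≤ C * |(t : ℝ) - (s : ℝ)| ^ α) ∧
       (∃ K : ℝ, ∀ s t : Set.Icc (0:ℝ) T,
          ‖p.1 t - p.1 s - p.2 s (X t - X s)‖ ≤ K * |(t : ℝ) - (s : ℝ)| ^ (2*α))}

/-- The controlled-path norm `‖Z'‖_{α} + ‖R‖_{2α} + |Z_0| + |Z'_0|`. -/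
noncomputable def ctrlNorm {U V : Type*} [NormedAddCommGroup U] [NormedSpace ℝ U]
    [NormedAddCommGroup V] [NormedSpace ℝ V] {T : ℝ} (hT : 0 ≤ T) (α : ℝ)
    (X : Set.Icc (0:ℝ) T → U)
    (p : (Set.Icc (0:ℝ) T → V) × (Set.Icc (0:ℝ) T → U →L[ℝ] V)) : ℝ :=
  hSemi T α p.2 + rSemi T α X p.1 p.2
    + ‖p.1 ⟨0, Set.left_mem_Icc.2 hT⟩‖ + ‖p.2 ⟨0, Set.left_mem_Icc.2 hT⟩‖

open Set

/-- Generic quotient-sup over pairs. -/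
noncomputable def qSup (T β : ℝ) (g : Icc (0:ℝ) T × Icc (0:ℝ) T → ℝ) : ℝ :=
  ⨆ p, if (p.1 : ℝ) < (p.2 : ℝ) then g p / ((p.2 : ℝ) - (p.1 : ℝ)) ^ β else 0

lemma qSup_le {T β : ℝ} {g : Icc (0:ℝ) T × Icc (0:ℝ) T → ℝ} {M : ℝ} (hM : 0 ≤ M)
    (h : ∀ p : Icc (0:ℝ) T × Icc (0:ℝ) T, (p.1:ℝ) < (p.2:ℝ) →
      g p ≤ M * ((p.2:ℝ) - (p.1:ℝ)) ^ β) :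
    qSup T β g ≤ M := by
  refine Real.iSup_le (fun p => ?_) hM
  split_ifs with hp
  · rw [div_le_iff₀ (Real.rpow_pos_of_pos (sub_pos.2 hp) β)]
    exact h p hp
  · exact hM

lemma qSup_bdd {T β : ℝ} {g : Icc (0:ℝ) T × Icc (0:ℝ) T → ℝ} {M : ℝ}
    (h : ∀ p : Icc (0:ℝ) T × Icc (0:ℝ) T, (p.1:ℝ) < (p.2:ℝ) →
      g p ≤ M * ((p.2:ℝ)-(p.1:ℝ)) ^ β) :
    BddAbove (Set.range fun p : Icc (0:ℝ) T × Icc (0:ℝ) T =>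
      if (p.1:ℝ) < (p.2:ℝ) then g p / ((p.2:ℝ)-(p.1:ℝ)) ^ β else 0) := by
  refine ⟨max M 0, ?_⟩
  rintro x ⟨p, rfl⟩
  dsimp only
  split_ifs with hp
  · exact le_max_of_le_left ((div_le_iff₀ (Real.rpow_pos_of_pos (sub_pos.2 hp) β)).2 (h p hp))
  · exact le_max_right _ _

lemma le_qSup {T β : ℝ} {g : Icc (0:ℝ) T × Icc (0:ℝ) T → ℝ} {M : ℝ}
    (h : ∀ p : Icc (0:ℝ) T × Icc (0:ℝ) T, (p.1:ℝ) < (p.2:ℝ) →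
      g p ≤ M * ((p.2:ℝ)-(p.1:ℝ)) ^ β)
    (p : Icc (0:ℝ) T × Icc (0:ℝ) T) (hp : (p.1:ℝ) < (p.2:ℝ)) :
    g p ≤ qSup T β g * ((p.2:ℝ)-(p.1:ℝ)) ^ β := by
  have h1 := le_ciSup (qSup_bdd h) p
  rw [if_pos hp] at h1
  have h2 : 0 < ((p.2:ℝ)-(p.1:ℝ)) ^ β := Real.rpow_pos_of_pos (sub_pos.2 hp) β
  calc g p = g p / ((p.2:ℝ)-(p.1:ℝ)) ^ β * ((p.2:ℝ)-(p.1:ℝ)) ^ β :=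
        (div_mul_cancel₀ _ h2.ne').symm
    _ ≤ _ := mul_le_mul_of_nonneg_right h1 h2.le

lemma qSup_nonneg {T β : ℝ} (hT : 0 ≤ T) {g : Icc (0:ℝ) T × Icc (0:ℝ) T → ℝ} {M : ℝ}
    (h : ∀ p : Icc (0:ℝ) T × Icc (0:ℝ) T, (p.1:ℝ) < (p.2:ℝ) →
      g p ≤ M * ((p.2:ℝ)-(p.1:ℝ)) ^ β) :
    0 ≤ qSup T β g := by
  have h1 := le_ciSup (qSup_bdd h) (⟨0, left_mem_Icc.2 hT⟩, ⟨0, left_mem_Icc.2 hT⟩)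
  rwa [if_neg (lt_irrefl _)] at h1

lemma hSemi_eq {E : Type*} [NormedAddCommGroup E] (T β : ℝ) (f : Icc (0:ℝ) T → E) :
    hSemi T β f = qSup T β (fun p => ‖f p.2 - f p.1‖) := rfl

lemma rSemi_eq {U V : Type*} [NormedAddCommGroup U] [NormedSpace ℝ U]
    [NormedAddCommGroup V] [NormedSpace ℝ V] (T α : ℝ)
    (X : Icc (0:ℝ) T → U) (Z : Icc (0:ℝ) T → V) (Z' : Icc (0:ℝ) T → U →L[ℝ] V) :
    rSemi T α X Z Z' = qSup T (2*α) (fun p => ‖Z p.2 - Z p.1 - Z' p.1 (X p.2 - X p.1)‖) := rfl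

/-- upgrade a `s < t` Hölder bound to all pairs. -/
lemma holder_all {E : Type*} [NormedAddCommGroup E] {T α : ℝ} (hα : 0 < α)
    {f : Icc (0:ℝ) T → E} {C : ℝ}
    (h : ∀ s t : Icc (0:ℝ) T, (s:ℝ) < (t:ℝ) → ‖f t - f s‖ ≤ C * ((t:ℝ)-(s:ℝ))^α) :
    ∀ s t : Icc (0:ℝ) T, ‖f t - f s‖ ≤ C * |(t:ℝ)-(s:ℝ)|^α := by
  intro s t
  rcases lt_trichotomy ((s:ℝ)) ((t:ℝ)) with hst | hst | hst
  · rw [abs_of_pos (sub_pos.2 hst)]; exact h s t hst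
  · have : s = t := Subtype.ext hst
    subst this
    simp [Real.zero_rpow hα.ne']
  · rw [norm_sub_rev, abs_sub_comm, abs_of_pos (sub_pos.2 hst)]; exact h t s hst

/-- upgrade a `s < t` remainder bound to all pairs. -/
lemma rem_all {U V : Type*} [NormedAddCommGroup U] [NormedSpace ℝ U]
    [NormedAddCommGroup V] [NormedSpace ℝ V]
    {T α CX : ℝ} (hα : 0 < α) {X : Icc (0:ℝ) T → U}
    (hX : ∀ s t : Icc (0:ℝ) T, ‖X t - X s‖ ≤ CX * |(t:ℝ) - (s:ℝ)| ^ α)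
    {Φ : Icc (0:ℝ) T → V} {Φ' : Icc (0:ℝ) T → U →L[ℝ] V} {A K : ℝ}
    (hACX : 0 ≤ A * CX)
    (hA : ∀ s t : Icc (0:ℝ) T, ‖Φ' t - Φ' s‖ ≤ A * |(t:ℝ)-(s:ℝ)| ^ α)
    (hK : ∀ s t : Icc (0:ℝ) T, (s:ℝ) < (t:ℝ) →
      ‖Φ t - Φ s - Φ' s (X t - X s)‖ ≤ K * ((t:ℝ)-(s:ℝ)) ^ (2*α)) :
    ∀ s t : Icc (0:ℝ) T,
      ‖Φ t - Φ s - Φ' s (X t - X s)‖ ≤ (K + A*CX) * |(t:ℝ)-(s:ℝ)| ^ (2*α) := by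
  intro s t
  rcases lt_trichotomy ((s:ℝ)) ((t:ℝ)) with hst | hst | hst
  · rw [abs_of_pos (sub_pos.2 hst)]
    refine (hK s t hst).trans ?_
    exact mul_le_mul_of_nonneg_right (le_add_of_nonneg_right hACX)
      (Real.rpow_nonneg (sub_pos.2 hst).le _)
  · have : s = t := Subtype.ext hst
    subst this
    simp [Real.zero_rpow (by positivity : (2*α) ≠ 0)]
  · -- t < s
    have hd : 0 < (s:ℝ) - (t:ℝ) := sub_pos.2 hst
    have key : Φ t - Φ s - Φ' s (X t - X s)
        = -(Φ s - Φ t - Φ' t (X s - X t)) + ((Φ' s - Φ' t) (X s - X t)) := by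
      simp [map_sub, ContinuousLinearMap.sub_apply]
      abel
    rw [key, abs_sub_comm]
    rw [abs_of_pos hd]
    have h2 : ((s:ℝ)-(t:ℝ)) ^ (2*α) = ((s:ℝ)-(t:ℝ)) ^ α * ((s:ℝ)-(t:ℝ)) ^ α := by
      rw [two_mul, Real.rpow_add hd]
    have b1 : ‖Φ s - Φ t - Φ' t (X s - X t)‖ ≤ K * ((s:ℝ)-(t:ℝ)) ^ (2*α) := hK t s hst
    have b2 : ‖(Φ' s - Φ' t) (X s - X t)‖ ≤ (A*CX) * ((s:ℝ)-(t:ℝ)) ^ (2*α) := by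
      have hA' : ‖Φ' s - Φ' t‖ ≤ A * ((s:ℝ)-(t:ℝ)) ^ α := by
        have := hA t s; rwa [abs_of_pos hd] at this
      have hX' : ‖X s - X t‖ ≤ CX * ((s:ℝ)-(t:ℝ)) ^ α := by
        have := hX t s; rwa [abs_of_pos hd] at this
      calc ‖(Φ' s - Φ' t) (X s - X t)‖ ≤ ‖Φ' s - Φ' t‖ * ‖X s - X t‖ :=
            ContinuousLinearMap.le_opNorm _ _
        _ ≤ (A * ((s:ℝ)-(t:ℝ)) ^ α) * (CX * ((s:ℝ)-(t:ℝ)) ^ α) :=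
            mul_le_mul hA' hX' (norm_nonneg _) ((norm_nonneg _).trans hA')
        _ = (A*CX) * (((s:ℝ)-(t:ℝ)) ^ α * ((s:ℝ)-(t:ℝ)) ^ α) := by ring
        _ = (A*CX) * ((s:ℝ)-(t:ℝ)) ^ (2*α) := by rw [h2]
    calc ‖-(Φ s - Φ t - Φ' t (X s - X t)) + ((Φ' s - Φ' t) (X s - X t))‖
        ≤ ‖-(Φ s - Φ t - Φ' t (X s - X t))‖ + ‖(Φ' s - Φ' t) (X s - X t)‖ := norm_add_le _ _
      _ = ‖Φ s - Φ t - Φ' t (X s - X t)‖ + ‖(Φ' s - Φ' t) (X s - X t)‖ := by rw [norm_neg]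
      _ ≤ K * ((s:ℝ)-(t:ℝ)) ^ (2*α) + (A*CX) * ((s:ℝ)-(t:ℝ)) ^ (2*α) := add_le_add b1 b2
      _ = (K + A*CX) * ((s:ℝ)-(t:ℝ)) ^ (2*α) := by ring

lemma path_facts {U V : Type*} [NormedAddCommGroup U] [NormedSpace ℝ U]
    [NormedAddCommGroup V] [NormedSpace ℝ V]
    {T α CX : ℝ} (hT : 0 ≤ T) (hα : 0 < α) (hCX : 0 ≤ CX)
    {X : Icc (0:ℝ) T → U}
    (hX : ∀ s t : Icc (0:ℝ) T, ‖X t - X s‖ ≤ CX * |(t:ℝ)-(s:ℝ)|^α)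
    {Z : Icc (0:ℝ) T → V} {Z' : Icc (0:ℝ) T → U →L[ℝ] V}
    (h : (Z, Z') ∈ ctrlSet T α X) :
    0 ≤ ctrlNorm hT α X (Z, Z') ∧
    (∀ s t : Icc (0:ℝ) T, ‖Z' t - Z' s‖ ≤ ctrlNorm hT α X (Z, Z') * |(t:ℝ)-(s:ℝ)|^α) ∧
    (∀ s t : Icc (0:ℝ) T, (s:ℝ) < (t:ℝ) →
      ‖Z t - Z s - Z' s (X t - X s)‖ ≤ ctrlNorm hT α X (Z, Z') * ((t:ℝ)-(s:ℝ))^(2*α)) ∧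
    (∀ s : Icc (0:ℝ) T, ‖Z' s‖ ≤ ctrlNorm hT α X (Z, Z') * (1 + T^α)) ∧
    (∀ s : Icc (0:ℝ) T, ‖Z s‖ ≤ ctrlNorm hT α X (Z, Z') * (1 + (1+CX)*T^(2*α) + CX*T^α)) ∧
    (∀ s t : Icc (0:ℝ) T, (s:ℝ) < (t:ℝ) →
      ‖Z t - Z s‖ ≤ (ctrlNorm hT α X (Z, Z') * (T^α + (1+T^α)*CX)) * ((t:ℝ)-(s:ℝ))^α) := by
  obtain ⟨⟨C, hC⟩, ⟨K, hK⟩⟩ := h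
  set N := ctrlNorm hT α X (Z, Z') with hNdef
  set z0 : Icc (0:ℝ) T := ⟨0, left_mem_Icc.2 hT⟩ with hz0def
  have hC' : ∀ p : Icc (0:ℝ) T × Icc (0:ℝ) T, (p.1:ℝ) < (p.2:ℝ) →
      ‖Z' p.2 - Z' p.1‖ ≤ C * ((p.2:ℝ)-(p.1:ℝ))^α := by
    intro p hp
    have := hC p.1 p.2
    rwa [abs_of_pos (sub_pos.2 hp)] at this
  have hK' : ∀ p : Icc (0:ℝ) T × Icc (0:ℝ) T, (p.1:ℝ) < (p.2:ℝ) →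
      ‖Z p.2 - Z p.1 - Z' p.1 (X p.2 - X p.1)‖ ≤ K * ((p.2:ℝ)-(p.1:ℝ))^(2*α) := by
    intro p hp
    have := hK p.1 p.2
    rwa [abs_of_pos (sub_pos.2 hp)] at this
  have hS1 : 0 ≤ hSemi T α Z' := by rw [hSemi_eq]; exact qSup_nonneg hT hC'
  have hS2 : 0 ≤ rSemi T α X Z Z' := by rw [rSemi_eq]; exact qSup_nonneg hT hK'
  have hNun : N = hSemi T α Z' + rSemi T α X Z Z' + ‖Z z0‖ + ‖Z' z0‖ := rfl
  have hN0 : 0 ≤ N := by rw [hNun]; positivity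
  have hhS : hSemi T α Z' ≤ N := by
    rw [hNun]; have := norm_nonneg (Z z0); have := norm_nonneg (Z' z0); linarith
  have hrS : rSemi T α X Z Z' ≤ N := by
    rw [hNun]; have := norm_nonneg (Z z0); have := norm_nonneg (Z' z0); linarith
  have hz0n : ‖Z z0‖ ≤ N := by
    rw [hNun]; have := norm_nonneg (Z' z0); linarith
  have hz'0n : ‖Z' z0‖ ≤ N := by
    rw [hNun]; have := norm_nonneg (Z z0); linarith
  have hZ'lt : ∀ s t : Icc (0:ℝ) T, (s:ℝ) < (t:ℝ) →
      ‖Z' t - Z' s‖ ≤ N * ((t:ℝ)-(s:ℝ))^α := by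
    intro s t hst
    have h1 := le_qSup hC' (s, t) hst
    rw [← hSemi_eq] at h1
    exact h1.trans (mul_le_mul_of_nonneg_right hhS
      (Real.rpow_nonneg (sub_pos.2 hst).le _))
  have hZ'all := holder_all hα hZ'lt
  have hRlt : ∀ s t : Icc (0:ℝ) T, (s:ℝ) < (t:ℝ) →
      ‖Z t - Z s - Z' s (X t - X s)‖ ≤ N * ((t:ℝ)-(s:ℝ))^(2*α) := by
    intro s t hst
    have h1 := le_qSup hK' (s, t) hst
    rw [← rSemi_eq] at h1
    exact h1.trans (mul_le_mul_of_nonneg_right hrS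
      (Real.rpow_nonneg (sub_pos.2 hst).le _))
  have habs : ∀ s : Icc (0:ℝ) T, ∀ β : ℝ, 0 < β → |(s:ℝ) - (z0:ℝ)| ^ β ≤ T ^ β := by
    intro s β hβ
    have : (z0:ℝ) = 0 := rfl
    rw [this, sub_zero, abs_of_nonneg s.2.1]
    exact Real.rpow_le_rpow s.2.1 s.2.2 hβ.le
  have supZ' : ∀ s : Icc (0:ℝ) T, ‖Z' s‖ ≤ N * (1 + T^α) := by
    intro s
    have h1 := hZ'all z0 s
    have h2 := habs s α hα
    have h3 := norm_sub_norm_le (Z' s) (Z' z0)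
    nlinarith [mul_le_mul_of_nonneg_left h2 hN0]
  have hRall := rem_all hα hX (mul_nonneg hN0 hCX) hZ'all hRlt
  have supZ : ∀ s : Icc (0:ℝ) T, ‖Z s‖ ≤ N * (1 + (1+CX)*T^(2*α) + CX*T^α) := by
    intro s
    have h1 := hRall z0 s
    have h2 := habs s (2*α) (by positivity)
    have h2' := habs s α hα
    have hXb : ‖X s - X z0‖ ≤ CX * T^α := by
      have := hX z0 s
      nlinarith [mul_le_mul_of_nonneg_left h2' hCX]
    have hlin : ‖Z' z0 (X s - X z0)‖ ≤ N * (CX * T^α) := by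
      calc ‖Z' z0 (X s - X z0)‖ ≤ ‖Z' z0‖ * ‖X s - X z0‖ := ContinuousLinearMap.le_opNorm _ _
        _ ≤ N * (CX * T^α) := mul_le_mul hz'0n hXb (norm_nonneg _) hN0
    have h4 : ‖Z s - Z z0‖ - ‖Z' z0 (X s - X z0)‖ ≤ ‖Z s - Z z0 - Z' z0 (X s - X z0)‖ :=
      norm_sub_norm_le _ _
    have h5 := norm_sub_norm_le (Z s) (Z z0)
    have h6 : 0 ≤ N + N * CX := by positivity
    nlinarith [mul_le_mul_of_nonneg_left h2 h6]
  have hHZ : ∀ s t : Icc (0:ℝ) T, (s:ℝ) < (t:ℝ) →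
      ‖Z t - Z s‖ ≤ (N * (T^α + (1+T^α)*CX)) * ((t:ℝ)-(s:ℝ))^α := by
    intro s t hst
    have hd : 0 < (t:ℝ) - (s:ℝ) := sub_pos.2 hst
    have hdα : ((t:ℝ)-(s:ℝ))^α ≤ T^α := by
      apply Real.rpow_le_rpow hd.le _ hα.le
      have := s.2.1; have := t.2.2; linarith
    have hd2 : ((t:ℝ)-(s:ℝ))^(2*α) = ((t:ℝ)-(s:ℝ))^α * ((t:ℝ)-(s:ℝ))^α := by
      rw [two_mul, Real.rpow_add hd]
    have h1 := hRlt s t hst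
    have hXb : ‖X t - X s‖ ≤ CX * ((t:ℝ)-(s:ℝ))^α := by
      have := hX s t; rwa [abs_of_pos hd] at this
    have hlin : ‖Z' s (X t - X s)‖ ≤ (N * (1+T^α)) * (CX * ((t:ℝ)-(s:ℝ))^α) := by
      calc ‖Z' s (X t - X s)‖ ≤ ‖Z' s‖ * ‖X t - X s‖ := ContinuousLinearMap.le_opNorm _ _
        _ ≤ _ := mul_le_mul (supZ' s) hXb (norm_nonneg _) (by positivity)
    have h4 : ‖Z t - Z s‖ - ‖Z' s (X t - X s)‖ ≤ ‖Z t - Z s - Z' s (X t - X s)‖ :=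
      norm_sub_norm_le _ _
    have hdα0 : 0 ≤ ((t:ℝ)-(s:ℝ))^α := Real.rpow_nonneg hd.le _
    nlinarith [mul_le_mul_of_nonneg_left (mul_le_mul_of_nonneg_right hdα hdα0) hN0]
  exact ⟨hN0, hZ'all, hRlt, supZ', supZ, hHZ⟩

set_option maxHeartbeats 1000000 in
theorem controlled_path_product
    (U V : Type*) [NormedAddCommGroup U] [NormedSpace ℝ U] [CompleteSpace U]
    [NormedAddCommGroup V] [NormedSpace ℝ V] [CompleteSpace V]
    (T α : ℝ) (hT : 0 < T) (hα : α ∈ Set.Ioc (1/3 : ℝ) (1/2 : ℝ))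
    (X : Set.Icc (0:ℝ) T → U) (CX : ℝ)
    (hX : ∀ s t : Set.Icc (0:ℝ) T, ‖X t - X s‖ ≤ CX * |(t : ℝ) - (s : ℝ)| ^ α) :
    ∃ C : ℝ, 0 < C ∧
      ∀ (Z : Set.Icc (0:ℝ) T → ℝ) (Z' : Set.Icc (0:ℝ) T → U →L[ℝ] ℝ)
        (Y : Set.Icc (0:ℝ) T → V) (Y' : Set.Icc (0:ℝ) T → U →L[ℝ] V),
        (Z, Z') ∈ ctrlSet (U := U) (V := ℝ) T α X →
        (Y, Y') ∈ ctrlSet (U := U) (V := V) T α X →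
        ((fun t => Z t • Y t, fun t => (Z' t).smulRight (Y t) + Z t • Y' t)
            ∈ ctrlSet (U := U) (V := V) T α X) ∧
        ctrlNorm hT.le α X
            ((fun t => Z t • Y t), fun t => (Z' t).smulRight (Y t) + Z t • Y' t) ≤
          C * ctrlNorm hT.le α X (Z, Z') * ctrlNorm hT.le α X (Y, Y') := by
  have hα0 : 0 < α := lt_trans (by norm_num) hα.1
  have hTα : 0 ≤ T ^ α := (Real.rpow_pos_of_pos hT α).le
  have hT2α : 0 ≤ T ^ (2*α) := (Real.rpow_pos_of_pos hT (2*α)).le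
  have hCX : 0 ≤ CX := by
    have h1 := hX ⟨0, Set.left_mem_Icc.2 hT.le⟩ ⟨T, Set.right_mem_Icc.2 hT.le⟩
    rw [show ((⟨T, Set.right_mem_Icc.2 hT.le⟩ : Icc (0:ℝ) T) : ℝ)
        - ((⟨0, Set.left_mem_Icc.2 hT.le⟩ : Icc (0:ℝ) T) : ℝ) = T by norm_num,
      abs_of_pos hT] at h1
    nlinarith [norm_nonneg (X ⟨T, Set.right_mem_Icc.2 hT.le⟩ - X ⟨0, Set.left_mem_Icc.2 hT.le⟩),
      Real.rpow_pos_of_pos hT α]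
  obtain ⟨c1, hc1def⟩ : ∃ c : ℝ, c = 1 + T^α := ⟨_, rfl⟩
  obtain ⟨c2, hc2def⟩ : ∃ c : ℝ, c = 1 + (1+CX)*T^(2*α) + CX*T^α := ⟨_, rfl⟩
  obtain ⟨c3, hc3def⟩ : ∃ c : ℝ, c = T^α + (1+T^α)*CX := ⟨_, rfl⟩
  have hc1 : 0 ≤ c1 := by rw [hc1def]; linarith
  have hc2 : 0 ≤ c2 := by
    rw [hc2def]; nlinarith [mul_nonneg hCX hTα, mul_nonneg (by linarith : (0:ℝ) ≤ 1+CX) hT2α]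
  have hc2one : 1 ≤ c2 := by
    rw [hc2def]; nlinarith [mul_nonneg hCX hTα, mul_nonneg (by linarith : (0:ℝ) ≤ 1+CX) hT2α]
  have hc3 : 0 ≤ c3 := by
    rw [hc3def]; nlinarith [mul_nonneg (by linarith : (0:ℝ) ≤ 1+T^α) hCX]
  refine ⟨4*c2 + 2*c1*c3 + c3^2 + c2^2 + 2*c1*c2, by
    nlinarith [mul_nonneg hc1 hc3, mul_nonneg hc1 hc2, sq_nonneg c3, sq_nonneg c2], ?_⟩
  intro Z Z' Y Y' hZm hYm
  obtain ⟨hN0, hZ'all, hRZ, supZ', supZ, hHZ⟩ := path_facts hT.le hα0 hCX hX hZm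
  obtain ⟨hM0, hY'all, hRY, supY', supY, hHY⟩ := path_facts hT.le hα0 hCX hX hYm
  set N := ctrlNorm hT.le α X (Z, Z') with hNdef
  set M := ctrlNorm hT.le α X (Y, Y') with hMdef
  rw [← hc1def] at supZ' supY'
  rw [← hc2def] at supZ supY
  rw [← hc3def] at hHZ hHY
  set z0 : Icc (0:ℝ) T := ⟨0, Set.left_mem_Icc.2 hT.le⟩ with hz0def
  -- Hölder bound for the product Gubinelli derivative, s < t
  have hKH0 : 0 ≤ (2*c2 + 2*c1*c3) * (N*M) := by
    have := mul_nonneg hc1 hc3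
    have := mul_nonneg hN0 hM0
    nlinarith
  have hKR0 : 0 ≤ (c3^2 + 2*c2) * (N*M) := by
    have := sq_nonneg c3
    have := mul_nonneg hN0 hM0
    nlinarith
  have hΦ'H : ∀ s t : Icc (0:ℝ) T, (s:ℝ) < (t:ℝ) →
      ‖((Z' t).smulRight (Y t) + Z t • Y' t) - ((Z' s).smulRight (Y s) + Z s • Y' s)‖
        ≤ (2*c2 + 2*c1*c3) * (N*M) * ((t:ℝ)-(s:ℝ))^α := by
    intro s t hst
    have hd : 0 < (t:ℝ) - (s:ℝ) := sub_pos.2 hst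
    have hdα0 : 0 ≤ ((t:ℝ)-(s:ℝ))^α := Real.rpow_nonneg hd.le _
    refine ContinuousLinearMap.opNorm_le_bound _ (mul_nonneg hKH0 hdα0) fun u => ?_
    have hZ'd : ‖Z' t - Z' s‖ ≤ N * ((t:ℝ)-(s:ℝ))^α := by
      have := hZ'all s t; rwa [abs_of_pos hd] at this
    have hY'd : ‖Y' t - Y' s‖ ≤ M * ((t:ℝ)-(s:ℝ))^α := by
      have := hY'all s t; rwa [abs_of_pos hd] at this
    have expand : ((Z' t).smulRight (Y t) + Z t • Y' t
          - ((Z' s).smulRight (Y s) + Z s • Y' s)) u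
        = ((Z' t - Z' s) u) • Y t + (Z' s u) • (Y t - Y s)
          + (Z t - Z s) • (Y' t u) + Z s • ((Y' t - Y' s) u) := by
      simp only [ContinuousLinearMap.sub_apply, ContinuousLinearMap.add_apply,
        ContinuousLinearMap.smulRight_apply, ContinuousLinearMap.smul_apply]
      module
    rw [expand]
    have b1 : ‖((Z' t - Z' s) u) • Y t‖ ≤ (N * ((t:ℝ)-(s:ℝ))^α * ‖u‖) * (M * c2) := by
      rw [norm_smul]
      refine mul_le_mul ?_ (supY t) (norm_nonneg _)
        (mul_nonneg (mul_nonneg hN0 hdα0) (norm_nonneg u))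
      exact (ContinuousLinearMap.le_opNorm _ _).trans
        (mul_le_mul_of_nonneg_right hZ'd (norm_nonneg u))
    have b2 : ‖(Z' s u) • (Y t - Y s)‖ ≤ (N * c1 * ‖u‖) * (M * c3 * ((t:ℝ)-(s:ℝ))^α) := by
      rw [norm_smul]
      refine mul_le_mul ?_ (hHY s t hst) (norm_nonneg _)
        (mul_nonneg (mul_nonneg hN0 hc1) (norm_nonneg u))
      exact (ContinuousLinearMap.le_opNorm _ _).trans
        (mul_le_mul_of_nonneg_right (supZ' s) (norm_nonneg u))
    have b3 : ‖(Z t - Z s) • (Y' t u)‖ ≤ (N * c3 * ((t:ℝ)-(s:ℝ))^α) * (M * c1 * ‖u‖) := by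
      rw [norm_smul]
      refine mul_le_mul (hHZ s t hst) ?_ (norm_nonneg _)
        (mul_nonneg (mul_nonneg hN0 hc3) hdα0)
      exact (ContinuousLinearMap.le_opNorm _ _).trans
        (mul_le_mul_of_nonneg_right (supY' t) (norm_nonneg u))
    have b4 : ‖Z s • ((Y' t - Y' s) u)‖ ≤ (N * c2) * (M * ((t:ℝ)-(s:ℝ))^α * ‖u‖) := by
      rw [norm_smul]
      refine mul_le_mul (supZ s) ?_ (norm_nonneg _) (mul_nonneg hN0 hc2)
      exact (ContinuousLinearMap.le_opNorm _ _).trans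
        (mul_le_mul_of_nonneg_right hY'd (norm_nonneg u))
    calc ‖((Z' t - Z' s) u) • Y t + (Z' s u) • (Y t - Y s)
          + (Z t - Z s) • (Y' t u) + Z s • ((Y' t - Y' s) u)‖
        ≤ ‖((Z' t - Z' s) u) • Y t + (Z' s u) • (Y t - Y s) + (Z t - Z s) • (Y' t u)‖
          + ‖Z s • ((Y' t - Y' s) u)‖ := norm_add_le _ _
      _ ≤ ‖((Z' t - Z' s) u) • Y t‖ + ‖(Z' s u) • (Y t - Y s)‖
          + ‖(Z t - Z s) • (Y' t u)‖ + ‖Z s • ((Y' t - Y' s) u)‖ :=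
          add_le_add_left norm_add₃_le _
      _ ≤ (2*c2 + 2*c1*c3) * (N*M) * ((t:ℝ)-(s:ℝ))^α * ‖u‖ := by nlinarith [b1, b2, b3, b4]
  -- remainder bound for the product, s < t
  have hRp : ∀ s t : Icc (0:ℝ) T, (s:ℝ) < (t:ℝ) →
      ‖Z t • Y t - Z s • Y s - ((Z' s).smulRight (Y s) + Z s • Y' s) (X t - X s)‖
        ≤ (c3^2 + 2*c2) * (N*M) * ((t:ℝ)-(s:ℝ))^(2*α) := by
    intro s t hst
    have hd : 0 < (t:ℝ) - (s:ℝ) := sub_pos.2 hst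
    have hdα0 : 0 ≤ ((t:ℝ)-(s:ℝ))^α := Real.rpow_nonneg hd.le _
    have hd2 : ((t:ℝ)-(s:ℝ))^(2*α) = ((t:ℝ)-(s:ℝ))^α * ((t:ℝ)-(s:ℝ))^α := by
      rw [two_mul, Real.rpow_add hd]
    have expand : Z t • Y t - Z s • Y s - ((Z' s).smulRight (Y s) + Z s • Y' s) (X t - X s)
        = (Z t - Z s) • (Y t - Y s) + (Z t - Z s - Z' s (X t - X s)) • Y s
          + Z s • (Y t - Y s - Y' s (X t - X s)) := by
      simp only [ContinuousLinearMap.add_apply, ContinuousLinearMap.smulRight_apply,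
        ContinuousLinearMap.smul_apply]
      module
    rw [expand]
    have b1 : ‖(Z t - Z s) • (Y t - Y s)‖
        ≤ (N*c3) * (M*c3) * ((t:ℝ)-(s:ℝ))^(2*α) := by
      rw [norm_smul]
      calc ‖Z t - Z s‖ * ‖Y t - Y s‖
          ≤ (N * c3 * ((t:ℝ)-(s:ℝ))^α) * (M * c3 * ((t:ℝ)-(s:ℝ))^α) :=
            mul_le_mul (hHZ s t hst) (hHY s t hst) (norm_nonneg _)
              (mul_nonneg (mul_nonneg hN0 hc3) hdα0)
        _ = (N*c3) * (M*c3) * ((t:ℝ)-(s:ℝ))^(2*α) := by rw [hd2]; ring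
    have b2 : ‖(Z t - Z s - Z' s (X t - X s)) • Y s‖
        ≤ (N * ((t:ℝ)-(s:ℝ))^(2*α)) * (M * c2) := by
      rw [norm_smul]
      exact mul_le_mul (hRZ s t hst) (supY s) (norm_nonneg _)
        (mul_nonneg hN0 (Real.rpow_nonneg hd.le _))
    have b3 : ‖Z s • (Y t - Y s - Y' s (X t - X s))‖
        ≤ (N * c2) * (M * ((t:ℝ)-(s:ℝ))^(2*α)) := by
      rw [norm_smul]
      exact mul_le_mul (supZ s) (hRY s t hst) (norm_nonneg _) (mul_nonneg hN0 hc2)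
    calc ‖(Z t - Z s) • (Y t - Y s) + (Z t - Z s - Z' s (X t - X s)) • Y s
          + Z s • (Y t - Y s - Y' s (X t - X s))‖
        ≤ ‖(Z t - Z s) • (Y t - Y s)‖ + ‖(Z t - Z s - Z' s (X t - X s)) • Y s‖
          + ‖Z s • (Y t - Y s - Y' s (X t - X s))‖ := norm_add₃_le
      _ ≤ (c3^2 + 2*c2) * (N*M) * ((t:ℝ)-(s:ℝ))^(2*α) := by nlinarith [b1, b2, b3]
  -- membership
  have hmem : ((fun t => Z t • Y t, fun t => (Z' t).smulRight (Y t) + Z t • Y' t)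
      ∈ ctrlSet (U := U) (V := V) T α X) := by
    constructor
    · exact ⟨(2*c2 + 2*c1*c3) * (N*M), holder_all hα0 hΦ'H⟩
    · refine ⟨(c3^2 + 2*c2) * (N*M) + ((2*c2 + 2*c1*c3) * (N*M)) * CX, ?_⟩
      exact rem_all hα0 hX (mul_nonneg hKH0 hCX) (holder_all hα0 hΦ'H) hRp
  refine ⟨hmem, ?_⟩
  -- norm bound
  have hS1 : hSemi T α (fun t => (Z' t).smulRight (Y t) + Z t • Y' t)
      ≤ (2*c2 + 2*c1*c3) * (N*M) := by
    rw [hSemi_eq]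
    exact qSup_le hKH0 (fun p hp => hΦ'H p.1 p.2 hp)
  have hS2 : rSemi T α X (fun t => Z t • Y t) (fun t => (Z' t).smulRight (Y t) + Z t • Y' t)
      ≤ (c3^2 + 2*c2) * (N*M) := by
    rw [rSemi_eq]
    exact qSup_le hKR0 (fun p hp => hRp p.1 p.2 hp)
  have hi1 : ‖Z z0 • Y z0‖ ≤ (N*c2) * (M*c2) := by
    rw [norm_smul]
    exact mul_le_mul (supZ z0) (supY z0) (norm_nonneg _) (mul_nonneg hN0 hc2)
  have hi2 : ‖(Z' z0).smulRight (Y z0) + Z z0 • Y' z0‖ ≤ (N*c1)*(M*c2) + (N*c2)*(M*c1) := by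
    refine (norm_add_le _ _).trans ?_
    have e1 : ‖(Z' z0).smulRight (Y z0)‖ = ‖Z' z0‖ * ‖Y z0‖ :=
      ContinuousLinearMap.norm_smulRight_apply _ _
    have e2 : ‖Z z0 • Y' z0‖ ≤ ‖Z z0‖ * ‖Y' z0‖ := ContinuousLinearMap.opNorm_smul_le _ _
    rw [e1]
    have h1 := mul_le_mul (supZ' z0) (supY z0) (norm_nonneg _) (mul_nonneg hN0 hc1)
    have h2 := mul_le_mul (supZ z0) (supY' z0) (norm_nonneg _) (mul_nonneg hN0 hc2)
    linarith
  have hun : ctrlNorm hT.le α X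
      ((fun t => Z t • Y t), fun t => (Z' t).smulRight (Y t) + Z t • Y' t)
      = hSemi T α (fun t => (Z' t).smulRight (Y t) + Z t • Y' t)
        + rSemi T α X (fun t => Z t • Y t) (fun t => (Z' t).smulRight (Y t) + Z t • Y' t)
        + ‖Z z0 • Y z0‖ + ‖(Z' z0).smulRight (Y z0) + Z z0 • Y' z0‖ := rfl
  rw [hun]
  nlinarith [hS1, hS2, hi1, hi2]
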